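/- For a connected finite simple graph G, equality Σ_{v} 1/(ζ(v)+1) = Σ_{v} 1/(deg_G(v)+1) holds if and only if G is regular. -/

import Mathlib

open SimpleGraph Finset

/-- The minimum degree of a subgraph `H` of `G`: the infimum over vertices of `H`
of the number of neighbors in `H`. -/
noncomputable def subMinDeg {V : Type*} (G : SimpleGraph V) (H : G.Subgraph) : ℕ :=
  sInf ((fun v => (H.neighborSet v).ncard) '' H.verts)

/-- The degenerate degree `ζ(v)`: the maximum of `δ(H)` over all subgraphs `H` of `G`
containing `v`. -/
noncomputable def zeta {V : Type*} (G : SimpleGraph V) (v : V) : ℕ :=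
  sSup {n | ∃ H : G.Subgraph, v ∈ H.verts ∧ subMinDeg G H = n}

/-- A vertex `u` is cheap if `ζ(u) = deg_G(u)` and `ζ(u) ≤ ζ(w)` for every `w ∈ N[u]`. -/
def Cheap {V : Type*} (G : SimpleGraph V) (u : V) : Prop :=
  zeta G u = (G.neighborSet u).ncard ∧ ∀ w, G.Adj u w → zeta G u ≤ zeta G w


section Aux
set_option linter.unusedSectionVars false
variable {V : Type*} [Fintype V]

lemma ncard_nbr (G : SimpleGraph V) [DecidableRel G.Adj] (v : V) :
    (G.neighborSet v).ncard = G.degree v := by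
  rw [Set.ncard_eq_toFinset_card', SimpleGraph.degree, SimpleGraph.neighborFinset]

lemma mem_zetaSet_le (G : SimpleGraph V) [DecidableRel G.Adj] (v : V) {n : ℕ}
    (hn : n ∈ {n | ∃ H : G.Subgraph, v ∈ H.verts ∧ subMinDeg G H = n}) :
    n ≤ G.degree v := by
  obtain ⟨H, hv, rfl⟩ := hn
  have h1 : subMinDeg G H ≤ (H.neighborSet v).ncard :=
    Nat.sInf_le ⟨v, hv, rfl⟩
  calc subMinDeg G H ≤ (H.neighborSet v).ncard := h1
    _ ≤ (G.neighborSet v).ncard :=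
        Set.ncard_le_ncard (H.neighborSet_subset v) (Set.toFinite _)
    _ = G.degree v := ncard_nbr G v

lemma zetaSet_nonempty (G : SimpleGraph V) [DecidableRel G.Adj] (v : V) :
    {n | ∃ H : G.Subgraph, v ∈ H.verts ∧ subMinDeg G H = n}.Nonempty :=
  ⟨_, G.singletonSubgraph v, by simp [SimpleGraph.singletonSubgraph], rfl⟩

lemma zetaSet_bdd (G : SimpleGraph V) [DecidableRel G.Adj] (v : V) :
    BddAbove {n | ∃ H : G.Subgraph, v ∈ H.verts ∧ subMinDeg G H = n} :=
  ⟨G.degree v, fun _ hn => mem_zetaSet_le G v hn⟩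

lemma zeta_le_degree (G : SimpleGraph V) [DecidableRel G.Adj] (v : V) :
    zeta G v ≤ G.degree v :=
  csSup_le (zetaSet_nonempty G v) (fun _ hn => mem_zetaSet_le G v hn)

lemma le_zeta (G : SimpleGraph V) [DecidableRel G.Adj] (H : G.Subgraph) {v : V}
    (hv : v ∈ H.verts) : subMinDeg G H ≤ zeta G v :=
  le_csSup (zetaSet_bdd G v) ⟨H, hv, rfl⟩

lemma regular_zeta (G : SimpleGraph V) [DecidableRel G.Adj] [Nonempty V] {d : ℕ}
    (hd : G.IsRegularOfDegree d) (v : V) : zeta G v = G.degree v := by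
  refine le_antisymm (zeta_le_degree G v) ?_
  have : subMinDeg G (⊤ : G.Subgraph) = d := by
    have : ((fun v => ((⊤ : G.Subgraph).neighborSet v).ncard) '' (⊤ : G.Subgraph).verts)
        = {d} := by
      ext n
      simp only [Set.mem_image, Set.mem_singleton_iff]
      constructor
      · rintro ⟨x, -, rfl⟩
        show (G.neighborSet x).ncard = d
        rw [ncard_nbr]; exact hd x
      · intro hn
        refine ⟨Classical.arbitrary V, by trivial, ?_⟩
        show (G.neighborSet _).ncard = n
        rw [ncard_nbr, hd _]; exact hn.symm
    rw [subMinDeg, this, csInf_singleton]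
  rw [hd v, ← this]
  exact le_zeta G ⊤ (by trivial)

lemma zeta_eq_imp_regular (G : SimpleGraph V) [DecidableRel G.Adj] [Nonempty V]
    (hG : G.Connected) (h : ∀ v, zeta G v = G.degree v) :
    ∃ d, G.IsRegularOfDegree d := by
  obtain ⟨u, hu⟩ := Finset.exists_max_image Finset.univ (fun v => G.degree v) ⟨Classical.arbitrary V, by simp⟩
  set D := G.degree u with hD
  have hmax : ∀ v, G.degree v ≤ D := fun v => hu.2 v (by simp)
  -- get witness subgraph for zeta u
  have hmem := Nat.sSup_mem (zetaSet_nonempty G u) (zetaSet_bdd G u)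
  obtain ⟨H, huH, hH⟩ := hmem
  rw [show sSup {n | ∃ H : G.Subgraph, u ∈ H.verts ∧ subMinDeg G H = n} = zeta G u from rfl,
    h u] at hH
  -- every vertex of H has full neighborhood in H
  have key : ∀ x ∈ H.verts, H.neighborSet x = G.neighborSet x ∧ G.degree x = D := by
    intro x hx
    have h1 : D ≤ (H.neighborSet x).ncard := by
      rw [hD, ← hH]; exact Nat.sInf_le ⟨x, hx, rfl⟩
    have h2 : (H.neighborSet x).ncard ≤ (G.neighborSet x).ncard :=
      Set.ncard_le_ncard (H.neighborSet_subset x) (Set.toFinite _)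
    have h3 : (G.neighborSet x).ncard = G.degree x := ncard_nbr G x
    have hdx : G.degree x = D := le_antisymm (hmax x) (le_trans h1 (h3 ▸ h2))
    refine ⟨Set.eq_of_subset_of_ncard_le (H.neighborSet_subset x) ?_ (Set.toFinite _), hdx⟩
    rw [h3, hdx]; exact h1
  have closed : ∀ x ∈ H.verts, ∀ y, G.Adj x y → y ∈ H.verts := by
    intro x hx y hxy
    have := (key x hx).1
    have : y ∈ H.neighborSet x := by rw [this]; exact hxy
    exact H.edge_vert (H.adj_symm this)
  refine ⟨D, fun v => ?_⟩
  have reach : ∀ {a b : V}, G.Walk a b → a ∈ H.verts → b ∈ H.verts := by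
    intro a b w
    induction w with
    | nil => exact id
    | cons hadj p ih => exact fun ha => ih (closed _ ha _ hadj)
  obtain ⟨w⟩ := hG u v
  exact (key v (reach w huH)).2


end Aux

theorem stmt_7 {V : Type*} [Fintype V] [Nonempty V] (G : SimpleGraph V)
    [DecidableRel G.Adj] (hG : G.Connected) :
    (∑ v : V, (1 : ℝ) / (zeta G v + 1)) = (∑ v : V, (1 : ℝ) / (G.degree v + 1)) ↔
      ∃ d, G.IsRegularOfDegree d := by
  constructor
  · intro hsum
    apply zeta_eq_imp_regular G hG
    have hle : ∀ v ∈ Finset.univ, (1:ℝ)/(G.degree v + 1) ≤ 1/(zeta G v + 1) := by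
      intro v _
      gcongr
      exact_mod_cast zeta_le_degree G v
    have heq := (Finset.sum_eq_sum_iff_of_le hle).mp hsum.symm
    intro v
    have hv := heq v (Finset.mem_univ v)
    field_simp at hv
    exact_mod_cast add_right_cancel hv
  · rintro ⟨d, hd⟩
    exact Finset.sum_congr rfl (fun v _ => by rw [regular_zeta G hd v])
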